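/- Let n, m be positive integers and λ ∈ ℂ. Let W := { (R^T L_m^{(1)} + Δ_n S, R^T L_m^{(2)} + Λ_n(λ) S) : S ∈ ℂ^{n×(2m+1)}, R ∈ ℂ^{(2m+1)×n} } ⊆ ℂ^{n×(2m+1)} × ℂ^{n×(2m+1)}, and let P := { (0, Y) : Y ∈ ℂ^{n×(2m+1)}, Y_{ij} = 0 unless j = 1 }. Then ℂ^{n×(2m+1)} × ℂ^{n×(2m+1)} = W ⊕ P. -/

import Mathlib

open Matrix

noncomputable section

/-- `Λ_n(λ)`: the `n × n` matrix with `(i,j)` entry `λ` if `i + j = n + 1`, `1` if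
`i + j = n + 2`, and `0` otherwise (1-based indices). -/
def lamM (n : ℕ) (lam : ℂ) : Matrix (Fin n) (Fin n) ℂ :=
  Matrix.of fun i j =>
    if (i : ℕ) + 1 + ((j : ℕ) + 1) = n + 1 then lam
    else if (i : ℕ) + 1 + ((j : ℕ) + 1) = n + 2 then 1 else 0

/-- `Δ_n`: the `n × n` matrix with `(i,j)` entry `1` if `i + j = n + 1` and `0`
otherwise (1-based indices). -/
def delM (n : ℕ) : Matrix (Fin n) (Fin n) ℂ :=
  Matrix.of fun i j => if (i : ℕ) + 1 + ((j : ℕ) + 1) = n + 1 then 1 else 0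

/-- `F_n`: the `n × (n+1)` matrix with `F_n(i,j) = 1` exactly when `j = i`. -/
def FM (n : ℕ) : Matrix (Fin n) (Fin (n + 1)) ℂ :=
  Matrix.of fun i j => if (j : ℕ) = (i : ℕ) then 1 else 0

/-- `G_n`: the `n × (n+1)` matrix with `G_n(i,j) = 1` exactly when `j = i + 1`. -/
def GM (n : ℕ) : Matrix (Fin n) (Fin (n + 1)) ℂ :=
  Matrix.of fun i j => if (j : ℕ) = (i : ℕ) + 1 then 1 else 0

/-- `L_n^{(1)} = [[0, F_nᵀ], [F_n, 0]]`, a symmetric `(2n+1) × (2n+1)` matrix. -/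
def L1M (n : ℕ) : Matrix (Fin (2 * n + 1)) (Fin (2 * n + 1)) ℂ :=
  Matrix.reindex (finSumFinEquiv.trans (finCongr (by omega)))
    (finSumFinEquiv.trans (finCongr (by omega)))
    (Matrix.fromBlocks 0 (FM n)ᵀ (FM n) 0)

/-- `L_n^{(2)} = [[0, G_nᵀ], [G_n, 0]]`, a symmetric `(2n+1) × (2n+1)` matrix. -/
def L2M (n : ℕ) : Matrix (Fin (2 * n + 1)) (Fin (2 * n + 1)) ℂ :=
  Matrix.reindex (finSumFinEquiv.trans (finCongr (by omega)))
    (finSumFinEquiv.trans (finCongr (by omega)))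
    (Matrix.fromBlocks 0 (GM n)ᵀ (GM n) 0)

theorem lamM_isSymm (n : ℕ) (lam : ℂ) : (lamM n lam).IsSymm := by
  unfold Matrix.IsSymm lamM
  ext i j
  simp only [Matrix.transpose_apply, Matrix.of_apply]
  split_ifs <;> first | rfl | omega

theorem delM_isSymm (n : ℕ) : (delM n).IsSymm := by
  unfold Matrix.IsSymm delM
  ext i j
  simp only [Matrix.transpose_apply, Matrix.of_apply]
  split_ifs <;> first | rfl | omega

theorem L1M_isSymm (n : ℕ) : (L1M n).IsSymm := by
  unfold Matrix.IsSymm L1M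
  rw [Matrix.transpose_reindex, Matrix.fromBlocks_transpose]
  simp

theorem L2M_isSymm (n : ℕ) : (L2M n).IsSymm := by
  unfold Matrix.IsSymm L2M
  rw [Matrix.transpose_reindex, Matrix.fromBlocks_transpose]
  simp

/-- The type of canonical summands: `H_k(λ)`, `K_k`, `L_k`. -/
inductive CanType where
  | H : ℕ → ℂ → CanType
  | K : ℕ → CanType
  | L : ℕ → CanType

/-- The size of a canonical pair. -/
def CanType.size : CanType → ℕ
  | .H k _ => k
  | .K k => k
  | .L k => 2 * k + 1

/-- The size parameter of a canonical pair. -/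
def CanType.param : CanType → ℕ
  | .H k _ => k
  | .K k => k
  | .L k => k

/-- The first matrix of a canonical pair. -/
def CanType.A : (c : CanType) → Matrix (Fin c.size) (Fin c.size) ℂ
  | .H k _ => delM k
  | .K k => lamM k 0
  | .L k => L1M k

/-- The second matrix of a canonical pair. -/
def CanType.B : (c : CanType) → Matrix (Fin c.size) (Fin c.size) ℂ
  | .H k lam => lamM k lam
  | .K k => delM k
  | .L k => L2M k

/-- Congruence of pairs of square complex matrices (over possibly different index
types): `(A', B') = (Sᵀ A S, Sᵀ B S)` for some invertible `S`. -/
def CongruentPairs {ι κ : Type} [Fintype ι] [Fintype κ] [DecidableEq ι] [DecidableEq κ]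
    (p : Matrix ι ι ℂ × Matrix ι ι ℂ) (q : Matrix κ κ ℂ × Matrix κ κ ℂ) : Prop :=
  ∃ S : Matrix ι κ ℂ, (∃ T : Matrix κ ι ℂ, S * T = 1 ∧ T * S = 1) ∧
    q.1 = Sᵀ * p.1 * S ∧ q.2 = Sᵀ * p.2 * S

/-- The linear map `(S, R) ↦ (Rᵀ A_j + A_i S, Rᵀ B_j + B_i S)`. -/
def offMap {ι κ : Type} [Fintype ι] [Fintype κ] (Ai Bi : Matrix ι ι ℂ)
    (Aj Bj : Matrix κ κ ℂ) :
    (Matrix ι κ ℂ × Matrix κ ι ℂ) →ₗ[ℂ] (Matrix ι κ ℂ × Matrix ι κ ℂ) where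
  toFun SR := (SR.2ᵀ * Aj + Ai * SR.1, SR.2ᵀ * Bj + Bi * SR.1)
  map_add' x y := by
    simp only [Prod.fst_add, Prod.snd_add, Matrix.transpose_add, Matrix.add_mul,
      Matrix.mul_add, Prod.mk_add_mk, Prod.ext_iff]
    constructor <;> abel
  map_smul' c x := by
    simp only [Prod.smul_fst, Prod.smul_snd, Matrix.transpose_smul, Matrix.smul_mul,
      Matrix.mul_smul, RingHom.id_apply, Prod.smul_mk, smul_add]

/-- `W = {(Rᵀ A_j + A_i S, Rᵀ B_j + B_i S) : S, R}`. -/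
def WSpace {ι κ : Type} [Fintype ι] [Fintype κ] (Ai Bi : Matrix ι ι ℂ)
    (Aj Bj : Matrix κ κ ℂ) : Submodule ℂ (Matrix ι κ ℂ × Matrix ι κ ℂ) :=
  LinearMap.range (offMap Ai Bi Aj Bj)

/-- The space of pairs of (rectangular) matrices supported on given sets of positions. -/
def entryPattern {ι κ : Type} (S1 S2 : Set (ι × κ)) :
    Submodule ℂ (Matrix ι κ ℂ × Matrix ι κ ℂ) where
  carrier := {x | (∀ i j, (i, j) ∉ S1 → x.1 i j = 0) ∧ (∀ i j, (i, j) ∉ S2 → x.2 i j = 0)}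
  add_mem' := by
    rintro a b ⟨ha1, ha2⟩ ⟨hb1, hb2⟩
    exact ⟨fun i j h => by show a.1 i j + b.1 i j = 0; rw [ha1 i j h, hb1 i j h, add_zero],
      fun i j h => by show a.2 i j + b.2 i j = 0; rw [ha2 i j h, hb2 i j h, add_zero]⟩
  zero_mem' := ⟨fun _ _ _ => rfl, fun _ _ _ => rfl⟩
  smul_mem' := by
    rintro c a ⟨ha1, ha2⟩
    exact ⟨fun i j h => by show c * a.1 i j = 0; rw [ha1 i j h, mul_zero],
      fun i j h => by show c * a.2 i j = 0; rw [ha2 i j h, mul_zero]⟩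


end

noncomputable section

section HLAux

lemma L1M_aux (m : ℕ) (h : m + 1 + m = 2 * m + 1) (a b : Fin (2 * m + 1)) :
    Matrix.fromBlocks (0 : Matrix (Fin (m+1)) (Fin (m+1)) ℂ) (FM m)ᵀ (FM m) 0
      ((finSumFinEquiv.trans (finCongr h)).symm a) ((finSumFinEquiv.trans (finCongr h)).symm b)
      = if ((b : ℕ) = (a : ℕ) + (m + 1) ∨ (a : ℕ) = (b : ℕ) + (m + 1)) then 1 else 0 := by
  obtain ⟨p, rfl⟩ := (finSumFinEquiv.trans (finCongr h)).surjective a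
  obtain ⟨q, rfl⟩ := (finSumFinEquiv.trans (finCongr h)).surjective b
  rw [Equiv.symm_apply_apply, Equiv.symm_apply_apply]
  rcases p with i | i <;> rcases q with j | j <;>
    · have hi := i.isLt
      have hj := j.isLt
      simp only [Equiv.trans_apply, finCongr_apply, Fin.coe_cast,
        finSumFinEquiv_apply_left, finSumFinEquiv_apply_right, Fin.coe_castAdd, Fin.coe_natAdd,
        Matrix.fromBlocks_apply₁₁, Matrix.fromBlocks_apply₁₂, Matrix.fromBlocks_apply₂₁,
        Matrix.fromBlocks_apply₂₂, Matrix.transpose_apply, FM, Matrix.of_apply, Matrix.zero_apply]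
      split_ifs <;> first | rfl | omega

lemma L1M_apply (m : ℕ) (a b : Fin (2 * m + 1)) :
    L1M m a b = if ((b : ℕ) = (a : ℕ) + (m + 1) ∨ (a : ℕ) = (b : ℕ) + (m + 1)) then 1 else 0 := by
  unfold L1M
  rw [Matrix.reindex_apply, Matrix.submatrix_apply]
  exact L1M_aux m _ a b

lemma L2M_aux (m : ℕ) (h : m + 1 + m = 2 * m + 1) (a b : Fin (2 * m + 1)) :
    Matrix.fromBlocks (0 : Matrix (Fin (m+1)) (Fin (m+1)) ℂ) (GM m)ᵀ (GM m) 0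
      ((finSumFinEquiv.trans (finCongr h)).symm a) ((finSumFinEquiv.trans (finCongr h)).symm b)
      = if (((b : ℕ) = (a : ℕ) + m ∧ 1 ≤ (a : ℕ)) ∨ ((a : ℕ) = (b : ℕ) + m ∧ 1 ≤ (b : ℕ)))
        then 1 else 0 := by
  obtain ⟨p, rfl⟩ := (finSumFinEquiv.trans (finCongr h)).surjective a
  obtain ⟨q, rfl⟩ := (finSumFinEquiv.trans (finCongr h)).surjective b
  rw [Equiv.symm_apply_apply, Equiv.symm_apply_apply]
  rcases p with i | i <;> rcases q with j | j <;>
    · have hi := i.isLt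
      have hj := j.isLt
      simp only [Equiv.trans_apply, finCongr_apply, Fin.coe_cast,
        finSumFinEquiv_apply_left, finSumFinEquiv_apply_right, Fin.coe_castAdd, Fin.coe_natAdd,
        Matrix.fromBlocks_apply₁₁, Matrix.fromBlocks_apply₁₂, Matrix.fromBlocks_apply₂₁,
        Matrix.fromBlocks_apply₂₂, Matrix.transpose_apply, GM, Matrix.of_apply, Matrix.zero_apply]
      split_ifs <;> first | rfl | omega

lemma L2M_apply (m : ℕ) (a b : Fin (2 * m + 1)) :
    L2M m a b = if (((b : ℕ) = (a : ℕ) + m ∧ 1 ≤ (a : ℕ)) ∨ ((a : ℕ) = (b : ℕ) + m ∧ 1 ≤ (b : ℕ)))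
      then 1 else 0 := by
  unfold L2M
  rw [Matrix.reindex_apply, Matrix.submatrix_apply]
  exact L2M_aux m _ a b

lemma sum_pick_of {N : ℕ} (g : Fin N → ℂ) (P : ℕ → Prop) [DecidablePred P] (v : ℕ) (hv : v < N)
    (h : ∀ k, k < N → (P k ↔ k = v)) :
    ∑ a : Fin N, (if P (a : ℕ) then g a else 0) = g ⟨v, hv⟩ := by
  rw [Finset.sum_eq_single ⟨v, hv⟩]
  · rw [if_pos ((h v hv).mpr rfl)]
  · intro a _ ha
    rw [if_neg]
    intro hp
    exact ha (Fin.ext ((h (a : ℕ) a.isLt).mp hp))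
  · simp

lemma sum_pick_none {N : ℕ} (g : Fin N → ℂ) (P : ℕ → Prop) [DecidablePred P]
    (h : ∀ k, k < N → ¬ P k) :
    ∑ a : Fin N, (if P (a : ℕ) then g a else 0) = 0 :=
  Finset.sum_eq_zero fun a _ => if_neg (h (a : ℕ) a.isLt)

lemma delM_mul_apply {n : ℕ} {κ : Type} [Fintype κ] (S : Matrix (Fin n) κ ℂ)
    (g : ℕ → κ → ℂ) (hg : ∀ i' c, S i' c = g (i' : ℕ) c) (i : Fin n) (b : κ) :
    (delM n * S) i b = g (n - 1 - (i : ℕ)) b := by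
  have hi := i.isLt
  rw [Matrix.mul_apply]
  have step : ∀ a : Fin n, delM n i a * S a b =
      (if (a : ℕ) = n - 1 - (i : ℕ) then g (a : ℕ) b else 0) := by
    intro a
    have ha := a.isLt
    rw [hg]
    simp only [delM, Matrix.of_apply]
    split_ifs <;> first | ring1 | (exfalso; omega)
  rw [Finset.sum_congr rfl fun a _ => step a,
    sum_pick_of (fun a : Fin n => g (a : ℕ) b) (fun k => k = n - 1 - (i : ℕ))
      (n - 1 - (i : ℕ)) (by omega) (fun k hk => Iff.rfl)]

lemma lamM_mul_apply {n : ℕ} {κ : Type} [Fintype κ] (lam : ℂ) (S : Matrix (Fin n) κ ℂ)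
    (g : ℕ → κ → ℂ) (hg : ∀ i' c, S i' c = g (i' : ℕ) c) (i : Fin n) (b : κ) :
    (lamM n lam * S) i b = lam * g (n - 1 - (i : ℕ)) b +
      (if 1 ≤ (i : ℕ) then g (n - (i : ℕ)) b else 0) := by
  have hi := i.isLt
  rw [Matrix.mul_apply]
  have step : ∀ a : Fin n, lamM n lam i a * S a b =
      (if (a : ℕ) = n - 1 - (i : ℕ) then lam * g (a : ℕ) b else 0) +
      (if (1 ≤ (i : ℕ) ∧ (a : ℕ) = n - (i : ℕ)) then g (a : ℕ) b else 0) := by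
    intro a
    have ha := a.isLt
    rw [hg]
    simp only [lamM, Matrix.of_apply]
    split_ifs <;> first | ring1 | (exfalso; omega)
  rw [Finset.sum_congr rfl fun a _ => step a, Finset.sum_add_distrib]
  congr 1
  · rw [sum_pick_of (fun a : Fin n => lam * g (a : ℕ) b) (fun k => k = n - 1 - (i : ℕ))
      (n - 1 - (i : ℕ)) (by omega) (fun k hk => Iff.rfl)]
  · by_cases hi1 : 1 ≤ (i : ℕ)
    · rw [if_pos hi1, sum_pick_of (fun a : Fin n => g (a : ℕ) b)
        (fun k => 1 ≤ (i : ℕ) ∧ k = n - (i : ℕ)) (n - (i : ℕ)) (by omega)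
        (fun k hk => ⟨fun h => h.2, fun h => ⟨hi1, h⟩⟩)]
    · rw [if_neg hi1, sum_pick_none (fun a : Fin n => g (a : ℕ) b)
        (fun k => 1 ≤ (i : ℕ) ∧ k = n - (i : ℕ)) (fun k hk hP => hi1 hP.1)]

lemma mulL1 {n' m : ℕ} (T : Matrix (Fin n') (Fin (2 * m + 1)) ℂ) (f : ℕ → ℕ → ℂ)
    (hf : ∀ i c, T i c = f (i : ℕ) (c : ℕ)) (i : Fin n') (b : Fin (2 * m + 1)) :
    (T * L1M m) i b =
      (if (b : ℕ) + m + 1 ≤ 2 * m then f (i : ℕ) ((b : ℕ) + m + 1) else 0) +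
      (if m + 1 ≤ (b : ℕ) then f (i : ℕ) ((b : ℕ) - (m + 1)) else 0) := by
  have hb := b.isLt
  rw [Matrix.mul_apply]
  have step : ∀ a : Fin (2 * m + 1), T i a * L1M m a b =
      (if (a : ℕ) = (b : ℕ) + m + 1 then f (i : ℕ) (a : ℕ) else 0) +
      (if ((b : ℕ) = (a : ℕ) + (m + 1)) then f (i : ℕ) (a : ℕ) else 0) := by
    intro a
    have ha := a.isLt
    rw [hf, L1M_apply]
    split_ifs <;> first | ring1 | (exfalso; omega)
  rw [Finset.sum_congr rfl fun a _ => step a, Finset.sum_add_distrib]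
  congr 1
  · by_cases hc : (b : ℕ) + m + 1 ≤ 2 * m
    · rw [if_pos hc, sum_pick_of (fun a : Fin (2 * m + 1) => f (i : ℕ) (a : ℕ))
        (fun k => k = (b : ℕ) + m + 1) ((b : ℕ) + m + 1) (by omega) (fun k hk => Iff.rfl)]
    · rw [if_neg hc, sum_pick_none (fun a : Fin (2 * m + 1) => f (i : ℕ) (a : ℕ))
        (fun k => k = (b : ℕ) + m + 1) (fun k hk => by omega)]
  · by_cases hc : m + 1 ≤ (b : ℕ)
    · rw [if_pos hc, sum_pick_of (fun a : Fin (2 * m + 1) => f (i : ℕ) (a : ℕ))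
        (fun k => (b : ℕ) = k + (m + 1)) ((b : ℕ) - (m + 1)) (by omega)
        (fun k hk => by constructor <;> (intro h; omega))]
    · rw [if_neg hc, sum_pick_none (fun a : Fin (2 * m + 1) => f (i : ℕ) (a : ℕ))
        (fun k => (b : ℕ) = k + (m + 1)) (fun k hk => by omega)]

lemma mulL2 {n' m : ℕ} (hm : 0 < m) (T : Matrix (Fin n') (Fin (2 * m + 1)) ℂ) (f : ℕ → ℕ → ℂ)
    (hf : ∀ i c, T i c = f (i : ℕ) (c : ℕ)) (i : Fin n') (b : Fin (2 * m + 1)) :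
    (T * L2M m) i b =
      (if 1 ≤ (b : ℕ) ∧ (b : ℕ) ≤ m then f (i : ℕ) ((b : ℕ) + m) else 0) +
      (if m + 1 ≤ (b : ℕ) then f (i : ℕ) ((b : ℕ) - m) else 0) := by
  have hb := b.isLt
  rw [Matrix.mul_apply]
  have step : ∀ a : Fin (2 * m + 1), T i a * L2M m a b =
      (if ((a : ℕ) = (b : ℕ) + m ∧ 1 ≤ (b : ℕ)) then f (i : ℕ) (a : ℕ) else 0) +
      (if ((b : ℕ) = (a : ℕ) + m ∧ 1 ≤ (a : ℕ)) then f (i : ℕ) (a : ℕ) else 0) := by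
    intro a
    have ha := a.isLt
    rw [hf, L2M_apply]
    split_ifs <;> first | ring1 | (exfalso; omega)
  rw [Finset.sum_congr rfl fun a _ => step a, Finset.sum_add_distrib]
  congr 1
  · by_cases hc : 1 ≤ (b : ℕ) ∧ (b : ℕ) ≤ m
    · rw [if_pos hc, sum_pick_of (fun a : Fin (2 * m + 1) => f (i : ℕ) (a : ℕ))
        (fun k => k = (b : ℕ) + m ∧ 1 ≤ (b : ℕ)) ((b : ℕ) + m) (by omega)
        (fun k hk => by constructor <;> (intro h; omega))]
    · rw [if_neg hc, sum_pick_none (fun a : Fin (2 * m + 1) => f (i : ℕ) (a : ℕ))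
        (fun k => k = (b : ℕ) + m ∧ 1 ≤ (b : ℕ)) (fun k hk => by omega)]
  · by_cases hc : m + 1 ≤ (b : ℕ)
    · rw [if_pos hc, sum_pick_of (fun a : Fin (2 * m + 1) => f (i : ℕ) (a : ℕ))
        (fun k => (b : ℕ) = k + m ∧ 1 ≤ k) ((b : ℕ) - m) (by omega)
        (fun k hk => by constructor <;> (intro h; omega))]
    · rw [if_neg hc, sum_pick_none (fun a : Fin (2 * m + 1) => f (i : ℕ) (a : ℕ))
        (fun k => (b : ℕ) = k + m ∧ 1 ≤ k) (fun k hk => by omega)]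

def colA (m : ℕ) (lam : ℂ) (Z : ℕ → ℕ → ℂ) : ℕ → ℕ → ℂ
  | 0 => fun _ => 0
  | c + 1 => fun i => Z i (c + 1 + m) + lam * colA m lam Z c i +
      (if i = 0 then 0 else colA m lam Z c (i - 1))

def colB (m : ℕ) (lam : ℂ) (Z : ℕ → ℕ → ℂ) : ℕ → ℕ → ℂ
  | 0 => fun i => Z i m
  | d + 1 => fun i => Z i (m - (d + 1)) + lam * colB m lam Z d i +
      (if i = 0 then 0 else colB m lam Z d (i - 1))

def Tfun (m : ℕ) (lam : ℂ) (Z : ℕ → ℕ → ℂ) (i c : ℕ) : ℂ :=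
  if c = 0 then 0 else if c ≤ m then colA m lam Z c i else colB m lam Z (2 * m - c) i

lemma Tfun_low (m : ℕ) (lam : ℂ) (Z : ℕ → ℕ → ℂ) (i c : ℕ) (hc : c ≤ m) :
    Tfun m lam Z i c = colA m lam Z c i := by
  unfold Tfun
  rcases Nat.eq_zero_or_pos c with rfl | hc0
  · rw [if_pos rfl]; rfl
  · rw [if_neg (by omega), if_pos hc]

lemma Tfun_high (m : ℕ) (lam : ℂ) (Z : ℕ → ℕ → ℂ) (i c : ℕ) (hc1 : m < c) :
    Tfun m lam Z i c = colB m lam Z (2 * m - c) i := by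
  unfold Tfun
  rw [if_neg (by omega), if_neg (by omega)]

lemma Tfun_spec (m : ℕ) (hm : 0 < m) (lam : ℂ) (Z : ℕ → ℕ → ℂ) (i b : ℕ)
    (hb1 : 1 ≤ b) (hb2 : b ≤ 2 * m) :
    ((if 1 ≤ b ∧ b ≤ m then Tfun m lam Z i (b + m) else 0) +
      (if m + 1 ≤ b then Tfun m lam Z i (b - m) else 0))
    - lam * ((if b + m + 1 ≤ 2 * m then Tfun m lam Z i (b + m + 1) else 0) +
      (if m + 1 ≤ b then Tfun m lam Z i (b - (m + 1)) else 0))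
    - (if i = 0 then 0 else
        ((if b + m + 1 ≤ 2 * m then Tfun m lam Z (i - 1) (b + m + 1) else 0) +
          (if m + 1 ≤ b then Tfun m lam Z (i - 1) (b - (m + 1)) else 0)))
    = Z i b := by
  rcases lt_trichotomy b m with hlt | heq | hgt
  · obtain ⟨d, hd⟩ : ∃ d, m - b = d + 1 := ⟨m - b - 1, by omega⟩
    have hA : 1 ≤ b ∧ b ≤ m := ⟨hb1, by omega⟩
    have hB : ¬ (m + 1 ≤ b) := by omega
    have hC : b + m + 1 ≤ 2 * m := by omega
    rw [if_pos hA, if_neg hB, if_pos hC, if_neg hB, if_pos hC, if_neg hB]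
    rw [Tfun_high m lam Z i (b + m) (by omega),
      Tfun_high m lam Z i (b + m + 1) (by omega),
      Tfun_high m lam Z (i - 1) (b + m + 1) (by omega)]
    rw [show 2 * m - (b + m) = d + 1 by omega, show 2 * m - (b + m + 1) = d by omega]
    rw [show colB m lam Z (d + 1) i = Z i (m - (d + 1)) + lam * colB m lam Z d i +
      (if i = 0 then 0 else colB m lam Z d (i - 1)) from rfl]
    rw [show m - (d + 1) = b by omega]
    rcases Nat.eq_zero_or_pos i with rfl | hi0
    · rw [if_pos rfl, if_pos rfl]; ring
    · rw [if_neg (show ¬ i = 0 by omega), if_neg (show ¬ i = 0 by omega)]; ring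
  · rw [heq] at hb1 ⊢
    have hB : ¬ (m + 1 ≤ m) := by omega
    have hC : ¬ (m + m + 1 ≤ 2 * m) := by omega
    rw [if_pos ⟨hb1, le_refl m⟩, if_neg hB, if_neg hC, if_neg hB, if_neg hC, if_neg hB]
    rw [Tfun_high m lam Z i (m + m) (by omega), show 2 * m - (m + m) = 0 by omega]
    rw [show colB m lam Z 0 i = Z i m from rfl]
    rcases Nat.eq_zero_or_pos i with rfl | hi0
    · rw [if_pos rfl]; ring
    · rw [if_neg (show ¬ i = 0 by omega)]; ring
  · obtain ⟨c, rfl⟩ : ∃ c, b = m + 1 + c := ⟨b - (m + 1), by omega⟩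
    have hA : ¬ (1 ≤ m + 1 + c ∧ m + 1 + c ≤ m) := by omega
    have hB : m + 1 ≤ m + 1 + c := by omega
    have hC : ¬ (m + 1 + c + m + 1 ≤ 2 * m) := by omega
    rw [if_neg hA, if_pos hB, if_neg hC, if_pos hB, if_neg hC, if_pos hB]
    rw [show m + 1 + c - m = c + 1 by omega, show m + 1 + c - (m + 1) = c by omega]
    rw [Tfun_low m lam Z i (c + 1) (by omega), Tfun_low m lam Z i c (by omega),
      Tfun_low m lam Z (i - 1) c (by omega)]
    rw [show colA m lam Z (c + 1) i = Z i (c + 1 + m) + lam * colA m lam Z c i +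
      (if i = 0 then 0 else colA m lam Z c (i - 1)) from rfl]
    rw [show c + 1 + m = m + 1 + c by omega]
    rcases Nat.eq_zero_or_pos i with rfl | hi0
    · rw [if_pos rfl, if_pos rfl]; ring
    · rw [if_neg (show ¬ i = 0 by omega), if_neg (show ¬ i = 0 by omega)]; ring

lemma offMap_pair {ι κ : Type} [Fintype ι] [Fintype κ] (Ai Bi : Matrix ι ι ℂ)
    (Aj Bj : Matrix κ κ ℂ) (S : Matrix ι κ ℂ) (R : Matrix κ ι ℂ) :
    offMap Ai Bi Aj Bj (S, R) = (Rᵀ * Aj + Ai * S, Rᵀ * Bj + Bi * S) := rfl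

lemma mem_entryPattern {ι κ : Type} {S1 S2 : Set (ι × κ)}
    {x : Matrix ι κ ℂ × Matrix ι κ ℂ} :
    x ∈ entryPattern S1 S2 ↔
      ((∀ i j, (i, j) ∉ S1 → x.1 i j = 0) ∧ (∀ i j, (i, j) ∉ S2 → x.2 i j = 0)) := Iff.rfl

end HLAux

/-- **Off-diagonal blocks `H_n(λ)` vs `L_m`.** With
`W = {(Rᵀ L_m^{(1)} + Δ_n S, Rᵀ L_m^{(2)} + Λ_n(λ) S)}` and `P` the pairs `(0, Y)` with
`Y` supported on the first column, one has
`ℂ^{n×(2m+1)} × ℂ^{n×(2m+1)} = W ⊕ P`. -/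
theorem H_L_offdiagonal (n m : ℕ) (hn : 0 < n) (hm : 0 < m) (lam : ℂ) :
    Disjoint (WSpace (delM n) (lamM n lam) (L1M m) (L2M m))
      (entryPattern (∅ : Set (Fin n × Fin (2 * m + 1)))
        {pq : Fin n × Fin (2 * m + 1) | (pq.2 : ℕ) = 0}) ∧
    WSpace (delM n) (lamM n lam) (L1M m) (L2M m) ⊔
      entryPattern (∅ : Set (Fin n × Fin (2 * m + 1)))
        {pq : Fin n × Fin (2 * m + 1) | (pq.2 : ℕ) = 0} = ⊤ := by
  constructor
  · -- disjointness
    rw [Submodule.disjoint_def]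
    rintro ⟨X, Y⟩ hW hP
    obtain ⟨⟨S, R⟩, hx⟩ := hW
    rw [offMap_pair] at hx
    rw [Prod.mk.injEq] at hx
    obtain ⟨hx1, hx2⟩ := hx
    obtain ⟨hP1, hP2⟩ := mem_entryPattern.mp hP
    obtain ⟨f, hf⟩ : ∃ f : ℕ → ℕ → ℂ,
        ∀ (i : Fin n) (c : Fin (2 * m + 1)), Rᵀ i c = f (i : ℕ) (c : ℕ) :=
      ⟨fun i c => if h : i < n ∧ c < 2 * m + 1 then Rᵀ ⟨i, h.1⟩ ⟨c, h.2⟩ else 0,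
        fun i c => by have := c.isLt; simp; intro h; omega⟩
    obtain ⟨gS, hgS⟩ : ∃ g : ℕ → Fin (2 * m + 1) → ℂ,
        ∀ (k : Fin n) (c : Fin (2 * m + 1)), S k c = g (k : ℕ) c :=
      ⟨fun k c => if h : k < n then S ⟨k, h⟩ c else 0, fun k c => by simp⟩
    have hP1' : ∀ (ii : ℕ) (hii : ii < n) (c : Fin (2 * m + 1)),
        ((if (c : ℕ) + m + 1 ≤ 2 * m then f ii ((c : ℕ) + m + 1) else 0) +
          (if m + 1 ≤ (c : ℕ) then f ii ((c : ℕ) - (m + 1)) else 0)) + gS (n - 1 - ii) c = 0 := by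
      intro ii hii c
      have h0 : X ⟨ii, hii⟩ c = 0 := hP1 _ _ (Set.notMem_empty _)
      rw [← hx1, Matrix.add_apply, mulL1 Rᵀ f hf ⟨ii, hii⟩ c,
        delM_mul_apply S gS hgS ⟨ii, hii⟩ c] at h0
      simp only [show ((⟨ii, hii⟩ : Fin n) : ℕ) = ii from rfl] at h0
      exact h0
    have hSv : ∀ (k : ℕ), k < n → ∀ (c : Fin (2 * m + 1)), gS k c =
        -((if (c : ℕ) + m + 1 ≤ 2 * m then f (n - 1 - k) ((c : ℕ) + m + 1) else 0) +
          (if m + 1 ≤ (c : ℕ) then f (n - 1 - k) ((c : ℕ) - (m + 1)) else 0)) := by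
      intro k hk c
      have h := hP1' (n - 1 - k) (by omega) c
      rw [show n - 1 - (n - 1 - k) = k by omega] at h
      linear_combination h
    have hPhi : ∀ (ii : ℕ), ii < n → ∀ (c : ℕ) (hc : c < 2 * m + 1), 1 ≤ c →
        ((if 1 ≤ c ∧ c ≤ m then f ii (c + m) else 0) +
          (if m + 1 ≤ c then f ii (c - m) else 0))
        - lam * ((if c + m + 1 ≤ 2 * m then f ii (c + m + 1) else 0) +
          (if m + 1 ≤ c then f ii (c - (m + 1)) else 0))
        - (if ii = 0 then 0 else
            ((if c + m + 1 ≤ 2 * m then f (ii - 1) (c + m + 1) else 0) +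
              (if m + 1 ≤ c then f (ii - 1) (c - (m + 1)) else 0))) = 0 := by
      intro ii hii c hc hc1
      have h0 : Y ⟨ii, hii⟩ ⟨c, hc⟩ = 0 := hP2 _ _ (show ¬ c = 0 by omega)
      rw [← hx2, Matrix.add_apply, mulL2 hm Rᵀ f hf ⟨ii, hii⟩ ⟨c, hc⟩,
        lamM_mul_apply lam S gS hgS ⟨ii, hii⟩ ⟨c, hc⟩] at h0
      simp only [show ((⟨ii, hii⟩ : Fin n) : ℕ) = ii from rfl,
        show ((⟨c, hc⟩ : Fin (2 * m + 1)) : ℕ) = c from rfl] at h0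
      by_cases hi1 : 1 ≤ ii
      · rw [if_pos hi1, hSv (n - 1 - ii) (by omega) ⟨c, hc⟩, hSv (n - ii) (by omega) ⟨c, hc⟩] at h0
        simp only [show ((⟨c, hc⟩ : Fin (2 * m + 1)) : ℕ) = c from rfl] at h0
        rw [show n - 1 - (n - 1 - ii) = ii by omega, show n - 1 - (n - ii) = ii - 1 by omega] at h0
        rw [if_neg (show ¬ ii = 0 by omega)]
        linear_combination h0
      · rw [if_neg hi1, hSv (n - 1 - ii) (by omega) ⟨c, hc⟩] at h0
        simp only [show ((⟨c, hc⟩ : Fin (2 * m + 1)) : ℕ) = c from rfl] at h0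
        rw [show n - 1 - (n - 1 - ii) = ii by omega] at h0
        rw [if_pos (show ii = 0 by omega)]
        linear_combination h0
    have claim : ∀ d, d ≤ m - 1 → ∀ j : ℕ, j < n → f j (2 * m - d) = 0 := by
      intro d
      induction d with
      | zero =>
        intro _ j hj
        have h := hPhi j hj m (by omega) hm
        rw [if_pos (show 1 ≤ m ∧ m ≤ m from ⟨hm, le_refl m⟩),
          if_neg (show ¬ m + 1 ≤ m by omega), if_neg (show ¬ m + m + 1 ≤ 2 * m by omega),
          if_neg (show ¬ m + 1 ≤ m by omega), if_neg (show ¬ m + m + 1 ≤ 2 * m by omega),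
          if_neg (show ¬ m + 1 ≤ m by omega)] at h
        simp only [add_zero, zero_add, mul_zero, ite_self, sub_zero] at h
        rw [show 2 * m - 0 = m + m by omega]
        exact h
      | succ d ih =>
        intro hd j hj
        have h := hPhi j hj (m - d - 1) (by omega) (by omega)
        rw [if_pos (show 1 ≤ m - d - 1 ∧ m - d - 1 ≤ m by omega),
          if_neg (show ¬ m + 1 ≤ m - d - 1 by omega),
          if_pos (show m - d - 1 + m + 1 ≤ 2 * m by omega),
          if_neg (show ¬ m + 1 ≤ m - d - 1 by omega),
          if_pos (show m - d - 1 + m + 1 ≤ 2 * m by omega),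
          if_neg (show ¬ m + 1 ≤ m - d - 1 by omega)] at h
        rw [show m - d - 1 + m + 1 = 2 * m - d by omega,
          show m - d - 1 + m = 2 * m - (d + 1) by omega] at h
        rw [ih (by omega) j hj] at h
        rcases eq_or_ne j 0 with rfl | hj0
        · rw [if_pos rfl] at h
          linear_combination h
        · rw [if_neg hj0, ih (by omega) (j - 1) (by omega)] at h
          linear_combination h
    rw [Prod.ext_iff]
    constructor
    · show X = 0
      ext i c
      rw [Matrix.zero_apply]
      exact hP1 i c (Set.notMem_empty _)
    · show Y = 0
      ext i c
      rw [Matrix.zero_apply]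
      by_cases hc0 : (c : ℕ) = 0
      · have hi := i.isLt
        rw [← hx2, Matrix.add_apply, mulL2 hm Rᵀ f hf i c,
          lamM_mul_apply lam S gS hgS i c]
        rw [if_neg (show ¬ (1 ≤ (c : ℕ) ∧ (c : ℕ) ≤ m) by omega),
          if_neg (show ¬ m + 1 ≤ (c : ℕ) by omega)]
        have hval : ∀ j : ℕ, j < n → f j ((c : ℕ) + m + 1) = 0 := by
          intro j hj
          rw [show (c : ℕ) + m + 1 = 2 * m - (m - 1) by omega]
          exact claim (m - 1) (le_refl _) j hj
        by_cases hi1 : 1 ≤ (i : ℕ)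
        · rw [if_pos hi1, hSv (n - 1 - (i : ℕ)) (by omega) c, hSv (n - (i : ℕ)) (by omega) c,
            show n - 1 - (n - 1 - (i : ℕ)) = (i : ℕ) by omega,
            show n - 1 - (n - (i : ℕ)) = (i : ℕ) - 1 by omega,
            if_pos (show (c : ℕ) + m + 1 ≤ 2 * m by omega),
            if_neg (show ¬ m + 1 ≤ (c : ℕ) by omega),
            if_pos (show (c : ℕ) + m + 1 ≤ 2 * m by omega),
            if_neg (show ¬ m + 1 ≤ (c : ℕ) by omega),
            hval (i : ℕ) hi, hval ((i : ℕ) - 1) (by omega)]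
          norm_num
        · rw [if_neg hi1, hSv (n - 1 - (i : ℕ)) (by omega) c,
            show n - 1 - (n - 1 - (i : ℕ)) = (i : ℕ) by omega,
            if_pos (show (c : ℕ) + m + 1 ≤ 2 * m by omega),
            if_neg (show ¬ m + 1 ≤ (c : ℕ) by omega),
            hval (i : ℕ) hi]
          norm_num
      · exact hP2 i c hc0
  · -- sum is everything
    rw [eq_top_iff]
    rintro ⟨X, Y⟩ -
    rw [Submodule.mem_sup]
    set Zf : ℕ → ℕ → ℂ := fun i b =>
      if h : i < n ∧ b < 2 * m + 1 then
        Y ⟨i, h.1⟩ ⟨b, h.2⟩ - lam * X ⟨i, h.1⟩ ⟨b, h.2⟩ -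
          (if i = 0 then 0 else X ⟨i - 1, lt_of_le_of_lt (Nat.sub_le i 1) h.1⟩ ⟨b, h.2⟩)
      else 0 with hZfdef
    set Tm : Matrix (Fin n) (Fin (2 * m + 1)) ℂ :=
      Matrix.of (fun i c => Tfun m lam Zf (i : ℕ) (c : ℕ)) with hTmdef
    set Sm : Matrix (Fin n) (Fin (2 * m + 1)) ℂ := delM n * (X - Tm * L1M m) with hSmdef
    refine ⟨offMap (delM n) (lamM n lam) (L1M m) (L2M m) (Sm, Tmᵀ),
      LinearMap.mem_range.mpr ⟨(Sm, Tmᵀ), rfl⟩,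
      (X, Y) - offMap (delM n) (lamM n lam) (L1M m) (L2M m) (Sm, Tmᵀ), ?_, by abel⟩
    rw [offMap_pair]
    have hTf : ∀ (i : Fin n) (c : Fin (2 * m + 1)), Tm i c = Tfun m lam Zf (i : ℕ) (c : ℕ) :=
      fun _ _ => rfl
    have hTT : Tmᵀᵀ = Tm := Matrix.transpose_transpose Tm
    obtain ⟨gU, hgU⟩ : ∃ g : ℕ → Fin (2 * m + 1) → ℂ,
        ∀ (k : Fin n) (c : Fin (2 * m + 1)), (X - Tm * L1M m) k c = g (k : ℕ) c :=
      ⟨fun k c => if h : k < n then (X - Tm * L1M m) ⟨k, h⟩ c else 0, fun k c => by simp⟩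
    have hgS : ∀ (k : Fin n) (c : Fin (2 * m + 1)), Sm k c = gU (n - 1 - (k : ℕ)) c := by
      intro k c
      rw [hSmdef]
      exact delM_mul_apply _ gU hgU k c
    rw [mem_entryPattern]
    constructor
    · intro i c _
      have hi := i.isLt
      show X i c - (Tmᵀᵀ * L1M m + delM n * Sm) i c = 0
      rw [hTT, Matrix.add_apply,
        delM_mul_apply Sm (fun k c => gU (n - 1 - k) c) hgS i c,
        show n - 1 - (n - 1 - (i : ℕ)) = (i : ℕ) by omega, ← hgU i c, Matrix.sub_apply]
      ring
    · intro i b hb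
      have hi := i.isLt
      have hbb := b.isLt
      have hb1 : 1 ≤ (b : ℕ) := by
        rcases Nat.eq_zero_or_pos (b : ℕ) with h0 | h1
        · exact absurd h0 hb
        · exact h1
      have hpf : (i : ℕ) - 1 < n := by omega
      show Y i b - (Tmᵀᵀ * L2M m + lamM n lam * Sm) i b = 0
      rw [hTT, Matrix.add_apply, mulL2 hm Tm (Tfun m lam Zf) hTf i b,
        lamM_mul_apply lam Sm (fun k c => gU (n - 1 - k) c) hgS i b,
        show n - 1 - (n - 1 - (i : ℕ)) = (i : ℕ) by omega]
      have h2 : gU (i : ℕ) b = X i b - (Tm * L1M m) i b := (hgU i b).symm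
      have h3 : gU ((i : ℕ) - 1) b =
          X ⟨(i : ℕ) - 1, hpf⟩ b - (Tm * L1M m) ⟨(i : ℕ) - 1, hpf⟩ b :=
        (hgU ⟨(i : ℕ) - 1, hpf⟩ b).symm
      rw [h2]
      have hspec := Tfun_spec m hm lam Zf (i : ℕ) (b : ℕ) hb1 (by omega)
      have hZv : Zf (i : ℕ) (b : ℕ) = Y i b - lam * X i b -
          (if (i : ℕ) = 0 then 0 else X ⟨(i : ℕ) - 1, hpf⟩ b) := by
        simp only [hZfdef]
        rw [dif_pos (show (i : ℕ) < n ∧ (b : ℕ) < 2 * m + 1 from ⟨i.isLt, b.isLt⟩)]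
      rw [mulL1 Tm (Tfun m lam Zf) hTf i b]
      by_cases hi1 : 1 ≤ (i : ℕ)
      · rw [if_pos hi1, show n - 1 - (n - (i : ℕ)) = (i : ℕ) - 1 by omega, h3,
          mulL1 Tm (Tfun m lam Zf) hTf ⟨(i : ℕ) - 1, hpf⟩ b]
        simp only [show ((⟨(i : ℕ) - 1, hpf⟩ : Fin n) : ℕ) = (i : ℕ) - 1 from rfl]
        rw [if_neg (show ¬ (i : ℕ) = 0 by omega)] at hspec hZv
        linear_combination - hZv - hspec
      · rw [if_neg hi1]
        rw [if_pos (show (i : ℕ) = 0 by omega)] at hspec hZv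
        linear_combination - hZv - hspec

end
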